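/- Every countable Tychonoff space has the property (κ). -/

import Mathlib

/-- Every countable Tychonoff space has property (κ). -/
theorem countable_has_kappa {X : Type*} [TopologicalSpace X] [T35Space X] [Countable X] :
    ∀ S : ℕ → Set X, (∀ n, (S n).Finite) → Pairwise (Function.onFun Disjoint S) →
      ∃ φ : ℕ → ℕ, StrictMono φ ∧ ∃ W : ℕ → Set X,
        (∀ k, IsOpen (W k) ∧ S (φ k) ⊆ W k) ∧ ∀ x : X, {k | x ∈ W k}.Finite := by
  intro S hSfin hdisj
  obtain ⟨f, hf⟩ := Countable.exists_injective_nat X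
  -- F m : finite set of the first points
  set F : ℕ → Set X := fun m => f ⁻¹' (Set.Iic m) with hF
  have hFfin : ∀ m, (F m).Finite := fun m =>
    (Set.finite_Iic m).preimage (hf.injOn)
  -- For each m, only finitely many n meet F m
  have hmeet : ∀ m, {n | (S n ∩ F m).Nonempty}.Finite := by
    intro m
    have hinj : Function.Injective (fun n : {n | (S n ∩ F m).Nonempty} =>
        (⟨n.2.choose, n.2.choose_spec.2⟩ : (F m))) := by
      rintro ⟨a, ha⟩ ⟨b, hb⟩ h
      simp only [Subtype.mk.injEq] at h ⊢
      by_contra hab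
      exact (hdisj hab).le_bot ⟨ha.choose_spec.1, h ▸ hb.choose_spec.1⟩
    haveI := (hFfin m).to_subtype
    have : Finite {n | (S n ∩ F m).Nonempty} := Finite.of_injective _ hinj
    exact Set.toFinite _
  -- A bound beyond which S n avoids F m
  have hbound : ∀ m, ∃ N, ∀ n, N ≤ n → Disjoint (S n) (F m) := by
    intro m
    obtain ⟨N, hN⟩ := (hmeet m).bddAbove
    refine ⟨N + 1, fun n hn => ?_⟩
    rw [Set.disjoint_iff_inter_eq_empty, ← Set.not_nonempty_iff_eq_empty]
    intro h
    exact absurd (hN h) (by omega)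
  choose N hN using hbound
  -- Define φ recursively
  set φ : ℕ → ℕ := fun k => Nat.rec (N 0) (fun k ih => max (ih + 1) (N (k + 1))) k with hφ
  have hφmono : StrictMono φ := strictMono_nat_of_lt_succ (fun n => by
    simp only [hφ]; exact lt_of_lt_of_le (Nat.lt_succ_self _) (le_max_left _ _))
  have hφN : ∀ k, N k ≤ φ k := by
    intro k
    cases k with
    | zero => simp [hφ]
    | succ k => exact le_max_right _ _
  have hφdisj : ∀ k, Disjoint (S (φ k)) (F k) := fun k => hN k (φ k) (hφN k)
  -- Separate S (φ k) from F k
  have hsep : ∀ k, ∃ U : Set X, IsOpen U ∧ S (φ k) ⊆ U ∧ Disjoint U (F k) := by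
    intro k
    obtain ⟨U, V, hU, hV, hSU, hFV, hUV⟩ :=
      SeparatedNhds.of_isCompact_isCompact ((hSfin (φ k)).isCompact)
        ((hFfin k).isCompact) (hφdisj k)
    exact ⟨U, hU, hSU, hUV.mono_right hFV⟩
  choose W hWopen hWsub hWdisj using hsep
  refine ⟨φ, hφmono, W, fun k => ⟨hWopen k, hWsub k⟩, fun x => ?_⟩
  apply Set.Finite.subset (Set.finite_Iio (f x))
  intro k hk
  by_contra h
  simp only [Set.mem_Iio, not_lt] at h
  have hxF : x ∈ F k := by simp only [hF, Set.mem_preimage, Set.mem_Iic]; omega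
  exact (hWdisj k).le_bot ⟨hk, hxF⟩
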